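/- Let s, t be positive integers, p, q ∈ ℂ, and let f(z) = z^{s+t} + p z^t + q. For v ∈ ℝ with v > 0, let k denote the number of roots of f in ℂ of norm strictly smaller than v, counted with multiplicity. Then: (i) if |q| > v^{s+t} + |p|·v^t then k = 0; (ii) if v^{s+t} > |q| + |p|·v^t then k = s + t; (iii) if |p|·v^t > |q| + v^{s+t} then k = t. -/

import Mathlib

open Polynomial


noncomputable def tri (s t : ℕ) (p c : ℂ) : Polynomial ℂ :=
  X ^ (s + t) + C p * X ^ t + C c

lemma tri_eval (s t : ℕ) (p c z : ℂ) :
    (tri s t p c).eval z = z ^ (s + t) + p * z ^ t + c := by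
  simp [tri]

lemma tri_monic (s t : ℕ) (hs : 0 < s) (ht : 0 < t) (p c : ℂ) :
    (tri s t p c).Monic := by
  unfold tri
  have h : degree (C p * X ^ t + C c) < (s + t : ℕ) := by
    apply lt_of_le_of_lt (degree_add_le _ _)
    have h1 : degree (C p * X ^ t) < (s + t : ℕ) :=
      lt_of_le_of_lt (degree_C_mul_X_pow_le _ _)
        (by exact_mod_cast Nat.lt_add_of_pos_left hs)
    have h2 : degree (C c) < (s + t : ℕ) :=
      lt_of_le_of_lt degree_C_le (by exact_mod_cast Nat.add_pos_left hs t)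
    exact max_lt h1 h2
  simpa [add_assoc] using monic_X_pow_add h

lemma tri_natDegree (s t : ℕ) (hs : 0 < s) (ht : 0 < t) (p c : ℂ) :
    (tri s t p c).natDegree = s + t := by
  unfold tri
  compute_degree!
  · simp [hs.ne']


lemma tri_card_roots (s t : ℕ) (hs : 0 < s) (ht : 0 < t) (p c : ℂ) :
    Multiset.card (tri s t p c).roots = s + t := by
  rw [← tri_natDegree s t hs ht p c]
  exact splits_iff_card_roots.mp (IsAlgClosed.splits _)

lemma tri_root_bound (s t : ℕ) (hs : 0 < s) (ht : 0 < t) (p c z : ℂ)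
    (hz : z ∈ (tri s t p c).roots) :
    ‖z‖ ≤ max 1 (‖p‖ + ‖c‖) := by
  have hroot : z ^ (s + t) + p * z ^ t + c = 0 := by
    have := (mem_roots ((tri_monic s t hs ht p c).ne_zero)).mp hz
    simpa [IsRoot, tri_eval] using this
  by_contra hcon
  push_neg at hcon
  set r := ‖z‖ with hr
  have h1 : 1 < r := lt_of_le_of_lt (le_max_left _ _) hcon
  have h2 : ‖p‖ + ‖c‖ < r := lt_of_le_of_lt (le_max_right _ _) hcon
  have hr0 : 0 < r := lt_trans one_pos h1
  have key : r ^ (s + t) ≤ ‖p‖ * r ^ t + ‖c‖ := by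
    have : z ^ (s + t) = -(p * z ^ t + c) := by linear_combination hroot
    calc r ^ (s + t) = ‖z ^ (s + t)‖ := by rw [hr, norm_pow]
      _ = ‖p * z ^ t + c‖ := by rw [this, norm_neg]
      _ ≤ ‖p * z ^ t‖ + ‖c‖ := norm_add_le _ _
      _ = ‖p‖ * r ^ t + ‖c‖ := by rw [norm_mul, norm_pow]
  have hgt : ‖p‖ * r ^ t + ‖c‖ < r ^ (s + t) := by
    have hrt1 : (1:ℝ) ≤ r ^ t := one_le_pow₀ h1.le
    have h3 : ‖p‖ * r ^ t + ‖c‖ ≤ (‖p‖ + ‖c‖) * r ^ t := by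
      have : ‖c‖ ≤ ‖c‖ * r ^ t :=
        le_mul_of_one_le_right (by positivity) hrt1
      nlinarith [this]
    have h4 : (‖p‖ + ‖c‖) * r ^ t < r * r ^ t := by
      apply mul_lt_mul_of_pos_right h2 (by positivity)
    have h5 : r * r ^ t ≤ r ^ (s + t) := by
      calc r * r ^ t = r ^ (1 + t) := by rw [pow_add, pow_one]
        _ ≤ r ^ (s + t) := pow_le_pow_right₀ h1.le (by omega)
    linarith
  linarith

lemma exists_enum (m : ℕ) (M : Multiset ℂ) (h : Multiset.card M = m) :
    ∃ Z : Fin m → ℂ, M = Multiset.map Z Finset.univ.val := by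
  obtain ⟨l, rfl⟩ : ∃ l : List ℂ, M = ↑l := ⟨M.toList, (Multiset.coe_toList M).symm⟩
  have hl : l.length = m := by simpa using h
  subst hl
  refine ⟨l.get, ?_⟩
  have huniv : (Finset.univ.val : Multiset (Fin l.length)) = ↑(List.finRange l.length) := by
    simp [Finset.univ, Fintype.elems]
  rw [huniv]
  rw [show Multiset.map l.get ↑(List.finRange l.length) = ↑((List.finRange l.length).map l.get)
    from rfl, ← List.ofFn_eq_map, List.ofFn_get]

lemma tri_eval_prod (s t : ℕ) (hs : 0 < s) (ht : 0 < t) (p c : ℂ)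
    (Z : Fin (s + t) → ℂ) (hZ : (tri s t p c).roots = Multiset.map Z Finset.univ.val)
    (z : ℂ) : (tri s t p c).eval z = ∏ i, (z - Z i) := by
  have hfac : tri s t p c = ((tri s t p c).roots.map fun a => X - C a).prod :=
    (IsAlgClosed.splits _).eq_prod_roots_of_monic (tri_monic s t hs ht p c)
  conv_lhs => rw [hfac]
  rw [hZ, Multiset.map_map, eval_multiset_prod, Multiset.map_map]
  rw [Finset.prod_eq_multiset_prod]
  simp [Function.comp]

lemma prod_X_sub_C_roots (n : ℕ) (W : Fin n → ℂ) :
    (∏ i, (X - C (W i))).roots = Multiset.map W Finset.univ.val := by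
  have : (∏ i, (X - C (W i))) = ((Multiset.map W Finset.univ.val).map fun a => X - C a).prod := by
    rw [Multiset.map_map, Finset.prod_eq_multiset_prod]
    simp [Function.comp]
  rw [this, roots_multiset_prod_X_sub_C]

open Filter Topology in
lemma roots_tendsto (s t : ℕ) (hs : 0 < s) (ht : 0 < t) (p : ℂ) (B : ℝ)
    (c : ℕ → ℂ) (clim : ℂ) (hc : Tendsto c atTop (𝓝 clim))
    (hB : ∀ n, ‖c n‖ ≤ B)
    (Z : ℕ → Fin (s + t) → ℂ)
    (hZ : ∀ n, (tri s t p (c n)).roots = Multiset.map (Z n) Finset.univ.val) :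
    ∃ φ : ℕ → ℕ, StrictMono φ ∧ ∃ W : Fin (s + t) → ℂ,
      (tri s t p clim).roots = Multiset.map W Finset.univ.val ∧
      ∀ i, Tendsto (fun k => Z (φ k) i) atTop (𝓝 (W i)) := by
  set M : ℝ := max 1 (‖p‖ + B) with hM
  -- all roots bounded by M
  have hbound : ∀ n i, Z n i ∈ Metric.closedBall (0 : ℂ) M := by
    intro n i
    have hmem : Z n i ∈ (tri s t p (c n)).roots := by
      rw [hZ n]
      exact Multiset.mem_map.mpr ⟨i, Finset.mem_univ_val _, rfl⟩
    have := tri_root_bound s t hs ht p (c n) _ hmem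
    simp only [Metric.mem_closedBall, dist_zero_right]
    calc ‖Z n i‖ = ‖Z n i‖ := rfl
      _ ≤ max 1 (‖p‖ + ‖c n‖) := this
      _ ≤ M := max_le_max le_rfl (by linarith [hB n])
  have hK : IsCompact (Set.univ.pi fun _ : Fin (s + t) => Metric.closedBall (0 : ℂ) M) :=
    isCompact_univ_pi fun _ => isCompact_closedBall _ _
  have hmemK : ∀ n, Z n ∈ Set.univ.pi fun _ : Fin (s + t) => Metric.closedBall (0 : ℂ) M :=
    fun n => fun i _ => hbound n i
  obtain ⟨W, -, φ, hφ, hWlim⟩ := hK.tendsto_subseq hmemK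
  have hWlim' : ∀ i, Tendsto (fun k => Z (φ k) i) atTop (𝓝 (W i)) := by
    intro i
    exact (continuous_apply i).continuousAt.tendsto.comp hWlim
  refine ⟨φ, hφ, W, ?_, hWlim'⟩
  -- identify the limit polynomial
  have hev : ∀ z : ℂ, (tri s t p clim).eval z = ∏ i, (z - W i) := by
    intro z
    have h1 : Tendsto (fun k => (tri s t p (c (φ k))).eval z) atTop
        (𝓝 ((tri s t p clim).eval z)) := by
      simp only [tri_eval]
      exact (tendsto_const_nhds.add tendsto_const_nhds).add
        ((hc.comp hφ.tendsto_atTop))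
    have h2 : Tendsto (fun k => ∏ i, (z - Z (φ k) i)) atTop (𝓝 (∏ i, (z - W i))) := by
      apply tendsto_finset_prod
      intro i _
      exact tendsto_const_nhds.sub (hWlim' i)
    have heq : (fun k => (tri s t p (c (φ k))).eval z) =
        fun k => ∏ i, (z - Z (φ k) i) := by
      funext k
      exact tri_eval_prod s t hs ht p (c (φ k)) (Z (φ k)) (hZ (φ k)) z
    rw [heq] at h1
    exact tendsto_nhds_unique h1 h2
  have hpoly : tri s t p clim = ∏ i, (X - C (W i)) := by
    apply Polynomial.funext
    intro z
    rw [hev z, eval_prod]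
    simp
  rw [hpoly, prod_X_sub_C_roots]

noncomputable def nroots (s t : ℕ) (p c : ℂ) (v : ℝ) : ℕ :=
  Multiset.card ((tri s t p c).roots.filter fun z => ‖z‖ < v)

lemma nroots_eq_card (s t : ℕ) (p c : ℂ) (v : ℝ) (Z : Fin (s + t) → ℂ)
    (hZ : (tri s t p c).roots = Multiset.map Z Finset.univ.val) :
    nroots s t p c v = (Finset.univ.filter fun i => ‖Z i‖ < v).card := by
  unfold nroots
  rw [hZ]
  rw [Multiset.filter_map]
  rw [Multiset.card_map]
  rfl

lemma no_root_on_circle (s t : ℕ) (p q c : ℂ) (v : ℝ) (hv : 0 < v)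
    (H3 : ‖p‖ * v ^ t > ‖q‖ + v ^ (s + t))
    (hcq : ‖c‖ ≤ ‖q‖)
    (z : ℂ) (hz : z ^ (s + t) + p * z ^ t + c = 0) : ‖z‖ ≠ v := by
  intro habs
  have h1 : p * z ^ t = -(z ^ (s + t) + c) := by linear_combination hz
  have h2 : ‖p‖ * v ^ t = ‖z ^ (s + t) + c‖ := by
    rw [← habs, ← norm_pow, ← norm_mul, h1, norm_neg]
  have h3 : ‖z ^ (s + t) + c‖ ≤ v ^ (s + t) + ‖q‖ := by
    calc ‖z ^ (s + t) + c‖ ≤ ‖z ^ (s + t)‖ + ‖c‖ :=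
          norm_add_le _ _
      _ ≤ v ^ (s + t) + ‖q‖ := by
          rw [norm_pow, habs]; linarith
  linarith

open Filter Topology in
lemma nroots_eventually_eq (s t : ℕ) (hs : 0 < s) (ht : 0 < t) (p q : ℂ) (v : ℝ)
    (hv : 0 < v) (H3 : ‖p‖ * v ^ t > ‖q‖ + v ^ (s + t))
    (c : ℕ → ℂ) (clim : ℂ) (hc : Tendsto c atTop (𝓝 clim))
    (hcq : ∀ n, ‖c n‖ ≤ ‖q‖) (hclim : ‖clim‖ ≤ ‖q‖) :
    ∃ φ : ℕ → ℕ, StrictMono φ ∧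
      ∀ᶠ k in atTop, nroots s t p (c (φ k)) v = nroots s t p clim v := by
  have hZ : ∀ n, ∃ Z : Fin (s + t) → ℂ,
      (tri s t p (c n)).roots = Multiset.map Z Finset.univ.val :=
    fun n => exists_enum (s + t) _ (tri_card_roots s t hs ht p (c n))
  choose Z hZ using hZ
  obtain ⟨φ, hφ, W, hW, hWlim⟩ :=
    roots_tendsto s t hs ht p (‖q‖) c clim hc hcq Z hZ
  refine ⟨φ, hφ, ?_⟩
  have hWne : ∀ i, ‖W i‖ ≠ v := by
    intro i
    have hmem : W i ∈ (tri s t p clim).roots := by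
      rw [hW]; exact Multiset.mem_map.mpr ⟨i, Finset.mem_univ_val _, rfl⟩
    have hroot : (W i) ^ (s + t) + p * (W i) ^ t + clim = 0 := by
      have := (mem_roots ((tri_monic s t hs ht p clim).ne_zero)).mp hmem
      simpa [IsRoot, tri_eval] using this
    exact no_root_on_circle s t p q clim v hv H3 hclim _ hroot
  have hiff : ∀ᶠ k in atTop, ∀ i,
      (‖Z (φ k) i‖ < v ↔ ‖W i‖ < v) := by
    rw [Filter.eventually_all]
    intro i
    have htd : Tendsto (fun k => ‖Z (φ k) i‖) atTop (𝓝 (‖W i‖)) :=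
      (continuous_norm.continuousAt.tendsto).comp (hWlim i)
    rcases lt_or_gt_of_ne (hWne i) with h | h
    · filter_upwards [htd.eventually_lt_const h] with k hk
      simp [hk, h]
    · filter_upwards [htd.eventually_const_lt h] with k hk
      constructor
      · intro hlt; linarith
      · intro hlt; linarith
  filter_upwards [hiff] with k hk
  rw [nroots_eq_card s t p (c (φ k)) v _ (hZ (φ k)), nroots_eq_card s t p clim v W hW]
  congr 1
  apply Finset.filter_congr
  intro i _
  simpa using hk i

lemma nroots_zero (s t : ℕ) (hs : 0 < s) (ht : 0 < t) (p q : ℂ) (v : ℝ) (hv : 0 < v)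
    (H3 : ‖p‖ * v ^ t > ‖q‖ + v ^ (s + t)) :
    nroots s t p 0 v = t := by
  have hps : v ^ s < ‖p‖ := by
    have hq : (0:ℝ) ≤ ‖q‖ := norm_nonneg q
    have hvt : (0:ℝ) < v ^ t := pow_pos hv t
    have : v ^ s * v ^ t < ‖p‖ * v ^ t := by
      rw [← pow_add]; linarith
    exact lt_of_mul_lt_mul_right this hvt.le
  have hfac : tri s t p 0 = X ^ t * (X ^ s + C p) := by
    unfold tri
    rw [map_zero]
    ring
  have hXt : ((X : Polynomial ℂ) ^ t).roots = t • ({0} : Multiset ℂ) := by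
    rw [roots_pow, roots_X]
  have hne : (X : Polynomial ℂ) ^ t * (X ^ s + C p) ≠ 0 :=
    mul_ne_zero (pow_ne_zero t X_ne_zero) (monic_X_pow_add_C p hs.ne').ne_zero
  have hroots : (tri s t p 0).roots =
      t • ({0} : Multiset ℂ) + ((X : Polynomial ℂ) ^ s + C p).roots := by
    rw [hfac, roots_mul hne, hXt]
  unfold nroots
  rw [hroots, Multiset.filter_add]
  have h1 : Multiset.filter (fun z => ‖z‖ < v) (t • ({0} : Multiset ℂ)) =
      t • ({0} : Multiset ℂ) := by
    apply Multiset.filter_eq_self.mpr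
    intro z hz
    rw [Multiset.nsmul_singleton] at hz
    rw [Multiset.eq_of_mem_replicate hz]
    simpa using hv
  have h2 : Multiset.filter (fun z => ‖z‖ < v)
      (((X : Polynomial ℂ) ^ s + C p).roots) = 0 := by
    rw [Multiset.filter_eq_nil]
    intro z hz
    have hroot : z ^ s + p = 0 := by
      have := (mem_roots (monic_X_pow_add_C p hs.ne').ne_zero).mp hz
      simpa [IsRoot] using this
    have habs : ‖z‖ ^ s = ‖p‖ := by
      rw [← norm_pow]
      have : z ^ s = -p := by linear_combination hroot
      rw [this, norm_neg]
    intro hlt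
    have : ‖z‖ ^ s ≤ v ^ s := pow_le_pow_left₀ (norm_nonneg z) hlt.le s
    rw [habs] at this
    linarith
  rw [h1, h2, add_zero, Multiset.nsmul_singleton, Multiset.card_replicate]

noncomputable def clampc (q : ℂ) (x : ℝ) : ℂ := ((max 0 (min 1 x) : ℝ) : ℂ) * q

lemma clampc_continuous (q : ℂ) : Continuous (clampc q) := by
  unfold clampc
  exact (Complex.continuous_ofReal.comp
    (continuous_const.max (continuous_const.min continuous_id))).mul continuous_const

lemma clampc_abs_le (q : ℂ) (x : ℝ) : ‖clampc q x‖ ≤ ‖q‖ := by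
  unfold clampc
  rw [norm_mul, Complex.norm_real, Real.norm_eq_abs]
  have h0 : (0:ℝ) ≤ max 0 (min 1 x) := le_max_left _ _
  have h1 : max 0 (min 1 x) ≤ 1 := max_le zero_le_one (min_le_left _ _)
  rw [abs_of_nonneg h0]
  nlinarith [norm_nonneg q]

open Filter Topology in
lemma nroots_locally_constant (s t : ℕ) (hs : 0 < s) (ht : 0 < t) (p q : ℂ) (v : ℝ)
    (hv : 0 < v) (H3 : ‖p‖ * v ^ t > ‖q‖ + v ^ (s + t)) :
    IsLocallyConstant (fun x : ℝ => nroots s t p (clampc q x) v) := by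
  rw [IsLocallyConstant.iff_eventually_eq]
  intro x
  rw [← Filter.tendsto_pure, Filter.tendsto_iff_seq_tendsto]
  intro u hu
  rw [Filter.tendsto_pure]
  by_contra hcon
  rw [Filter.not_eventually] at hcon
  obtain ⟨ψ, hψmono, hψ⟩ := Filter.extraction_of_frequently_atTop hcon
  set c : ℕ → ℂ := fun n => clampc q (u (ψ n)) with hcdef
  have hctend : Tendsto c atTop (𝓝 (clampc q x)) :=
    ((clampc_continuous q).continuousAt.tendsto).comp (hu.comp hψmono.tendsto_atTop)
  obtain ⟨φ, hφ, hev⟩ := nroots_eventually_eq s t hs ht p q v hv H3 c (clampc q x)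
    hctend (fun n => clampc_abs_le q _) (clampc_abs_le q x)
  obtain ⟨k, hk⟩ := hev.exists
  exact hψ (φ k) hk

/-- Bohl's first theorem (Pellet-type bounds for trinomials): for
`f = z^(s+t) + p z^t + q` and `v > 0`, if `k` is the number of roots of `f` of
norm strictly smaller than `v` (with multiplicity), then the three lopsidedness
conditions force `k = 0`, `k = s + t`, `k = t` respectively. -/
theorem bohl_first_theorem (s t : ℕ) (hs : 0 < s) (ht : 0 < t) (p q : ℂ)
    (v : ℝ) (hv : 0 < v) (k : ℕ)
    (hk : k = Multiset.card
      (((X ^ (s + t) + C p * X ^ t + C q : Polynomial ℂ)).roots.filter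
        (fun z => ‖z‖ < v))) :
    (‖q‖ > v ^ (s + t) + ‖p‖ * v ^ t → k = 0) ∧
    (v ^ (s + t) > ‖q‖ + ‖p‖ * v ^ t → k = s + t) ∧
    (‖p‖ * v ^ t > ‖q‖ + v ^ (s + t) → k = t) := by
  have hk' : k = nroots s t p q v := hk
  have hrooteq : ∀ z ∈ (tri s t p q).roots, z ^ (s + t) + p * z ^ t + q = 0 := by
    intro z hz
    have := (mem_roots ((tri_monic s t hs ht p q).ne_zero)).mp hz
    simpa [IsRoot, tri_eval] using this
  refine ⟨?_, ?_, ?_⟩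
  · -- case (i): no roots in the disk
    intro H1
    rw [hk']
    unfold nroots
    rw [Multiset.filter_eq_nil.mpr, Multiset.card_zero]
    intro z hz hlt
    have hroot := hrooteq z hz
    have hq : q = -(z ^ (s + t) + p * z ^ t) := by linear_combination hroot
    have hzle : ‖z‖ ≤ v := hlt.le
    have h1 : ‖q‖ ≤ ‖z‖ ^ (s + t) + ‖p‖ * ‖z‖ ^ t := by
      rw [hq, norm_neg]
      calc ‖z ^ (s + t) + p * z ^ t‖
          ≤ ‖z ^ (s + t)‖ + ‖p * z ^ t‖ := norm_add_le _ _
        _ = ‖z‖ ^ (s + t) + ‖p‖ * ‖z‖ ^ t := by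
            rw [norm_pow, norm_mul, norm_pow]
    have h2 : ‖z‖ ^ (s + t) ≤ v ^ (s + t) :=
      pow_le_pow_left₀ (norm_nonneg z) hzle _
    have h3 : ‖z‖ ^ t ≤ v ^ t := pow_le_pow_left₀ (norm_nonneg z) hzle _
    nlinarith [norm_nonneg p]
  · -- case (ii): all roots in the disk
    intro H2
    rw [hk']
    unfold nroots
    rw [Multiset.filter_eq_self.mpr, tri_card_roots s t hs ht p q]
    intro z hz
    by_contra hge
    push_neg at hge
    have hroot := hrooteq z hz
    set r := ‖z‖ with hr
    have hr0 : 0 < r := lt_of_lt_of_le hv hge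
    have h1 : r ^ (s + t) ≤ ‖p‖ * r ^ t + ‖q‖ := by
      have hzz : z ^ (s + t) = -(p * z ^ t + q) := by linear_combination hroot
      calc r ^ (s + t) = ‖z ^ (s + t)‖ := by rw [hr, norm_pow]
        _ = ‖p * z ^ t + q‖ := by rw [hzz, norm_neg]
        _ ≤ ‖p * z ^ t‖ + ‖q‖ := norm_add_le _ _
        _ = ‖p‖ * r ^ t + ‖q‖ := by rw [norm_mul, norm_pow]
    have hps : ‖p‖ < v ^ s := by
      have hvt : (0:ℝ) < v ^ t := pow_pos hv t
      have : ‖p‖ * v ^ t < v ^ s * v ^ t := by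
        rw [← pow_add]; nlinarith [norm_nonneg q]
      exact lt_of_mul_lt_mul_right this hvt.le
    have h2 : v ^ s ≤ r ^ s := pow_le_pow_left₀ hv.le hge s
    have h3 : v ^ t ≤ r ^ t := pow_le_pow_left₀ hv.le hge t
    have h4 : v ^ t * (v ^ s - ‖p‖) ≤ r ^ t * (r ^ s - ‖p‖) := by
      apply mul_le_mul h3 (by linarith) (by linarith) (by positivity)
    rw [pow_add] at h1 H2
    nlinarith
  · -- case (iii): exactly t roots in the disk
    intro H3
    rw [hk']
    have h0 : clampc q 0 = 0 := by norm_num [clampc]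
    have h1 : clampc q 1 = q := by norm_num [clampc]
    have := (nroots_locally_constant s t hs ht p q v hv H3).apply_eq_of_preconnectedSpace
      (1 : ℝ) (0 : ℝ)
    simp only [h0, h1] at this
    rw [this, nroots_zero s t hs ht p q v hv H3]
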